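/- Let X_1,...,X_m be independent Bernoulli(p_i), W their sum, λ_1 = Σ p_i, q_i = 1-p_i. Then for bounded g: ℤ → ℝ, E[(W - λ_1)Δg(W)] = Σ_{i=1}^m p_i q_i E[Δ²g(W_i)], where W_i = W - X_i. -/

import Mathlib

open MeasureTheory ProbabilityTheory Finset

private lemma integrable_comp_bdd' {Ω : Type*} [MeasureSpace Ω]
    [IsProbabilityMeasure (ℙ : Measure Ω)]
    {Y : Ω → ℤ} (hY : Measurable Y) {f : ℤ → ℝ} {C : ℝ} (hf : ∀ z, |f z| ≤ C) :
    Integrable (fun ω => f (Y ω)) ℙ := by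
  refine Integrable.mono' (integrable_const C)
    ((measurable_from_top.comp hY).aestronglyMeasurable) ?_
  exact Filter.Eventually.of_forall fun ω => by simpa using hf (Y ω)

theorem stmt_11 {Ω : Type*} [MeasureSpace Ω] [IsProbabilityMeasure (ℙ : Measure Ω)]
    (m : ℕ) (X : Fin m → Ω → ℤ) (p : Fin m → ℝ)
    (hmeas : ∀ i, Measurable (X i))
    (hind : iIndepFun X ℙ)
    (h01 : ∀ i ω, X i ω = 0 ∨ X i ω = 1)
    (hp : ∀ i, (ℙ {ω | X i ω = 1}).toReal = p i)
    (l1 : ℝ) (hl1 : l1 = ∑ i, p i)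
    (g : ℤ → ℝ) (hb : ∃ C, ∀ z, |g z| ≤ C) :
    ∫ ω, (((∑ j, X j ω : ℤ) : ℝ) - l1)
        * (g ((∑ j, X j ω) + 1) - g (∑ j, X j ω)) ∂ℙ
      = ∑ i, p i * (1 - p i) *
          ∫ ω, (g ((∑ j, X j ω) - X i ω + 2) - 2 * g ((∑ j, X j ω) - X i ω + 1)
              + g ((∑ j, X j ω) - X i ω)) ∂ℙ := by
  classical
  obtain ⟨C, hC⟩ := hb
  have hWmeas : Measurable (fun ω : Ω => ∑ j, X j ω) :=
    Finset.measurable_sum _ (fun j _ => hmeas j)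
  have hWimeas : ∀ i, Measurable (fun ω : Ω => (∑ j, X j ω) - X i ω) :=
    fun i => hWmeas.sub (hmeas i)
  -- independence of X i and W - X i
  have hindep : ∀ i : Fin m, IndepFun (fun ω => (∑ j, X j ω) - X i ω) (X i) ℙ := by
    intro i
    have h1 : (fun ω : Ω => (∑ j, X j ω) - X i ω)
        = ∑ j ∈ univ.erase i, X j := by
      funext ω
      have h2 : ∑ j ∈ univ.erase i, X j ω + X i ω = ∑ j, X j ω :=
        Finset.sum_erase_add univ (fun j => X j ω) (mem_univ i)
      simp only [Finset.sum_apply]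
      omega
    rw [h1]
    exact hind.indepFun_finsetSum_of_notMem hmeas (notMem_erase i univ)
  -- cast of X i is {0,1}-valued
  have hXcast : ∀ i ω, ((X i ω : ℤ) : ℝ) = 0 ∨ ((X i ω : ℤ) : ℝ) = 1 := by
    intro i ω; rcases h01 i ω with h | h <;> simp [h]
  -- integrability of cast of X i and 1 - X i
  have hXint : ∀ i : Fin m, Integrable (fun ω => ((X i ω : ℤ) : ℝ)) ℙ := by
    intro i
    refine Integrable.mono' (integrable_const 1)
      ((measurable_from_top.comp (hmeas i)).aestronglyMeasurable) ?_
    refine Filter.Eventually.of_forall fun ω => ?_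
    rcases hXcast i ω with h | h <;> simp [h]
  have hXint' : ∀ i : Fin m, Integrable (fun ω => 1 - ((X i ω : ℤ) : ℝ)) ℙ :=
    fun i => (integrable_const 1).sub (hXint i)
  -- expectation of X i
  have hEX : ∀ i : Fin m, ∫ ω, ((X i ω : ℤ) : ℝ) ∂ℙ = p i := by
    intro i
    have hseteq : (fun ω => ((X i ω : ℤ) : ℝ))
        = Set.indicator {ω | X i ω = 1} (fun _ => (1:ℝ)) := by
      funext ω
      rcases h01 i ω with h | h <;> simp [Set.indicator, h]
    have hms : MeasurableSet {ω | X i ω = 1} := hmeas i (measurableSet_singleton 1)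
    rw [hseteq, integral_indicator_const _ hms, smul_eq_mul, mul_one, measureReal_def, hp i]
  have hEX' : ∀ i : Fin m, ∫ ω, (1 - ((X i ω : ℤ) : ℝ)) ∂ℙ = 1 - p i := by
    intro i
    rw [integral_sub (integrable_const 1) (hXint i), hEX i, integral_const]
    simp
  -- integrability of bounded functions of W - X i
  have hψint : ∀ (i : Fin m) (f : ℤ → ℝ), (∀ z, |f z| ≤ 2 * C) →
      Integrable (fun ω => f ((∑ j, X j ω) - X i ω)) ℙ :=
    fun i f hf => integrable_comp_bdd' (hWimeas i) hf
  have h2C : ∀ a b : ℤ, |g a - g b| ≤ 2 * C := by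
    intro a b
    calc |g a - g b| ≤ |g a| + |g b| := abs_sub _ _
    _ ≤ 2 * C := by have := hC a; have := hC b; linarith
  -- key computation for each i
  have key : ∀ i : Fin m,
      ∫ ω, ((((X i ω : ℤ) : ℝ) - p i) * (g ((∑ j, X j ω) + 1) - g (∑ j, X j ω))) ∂ℙ
      = p i * (1 - p i) *
          ∫ ω, (g ((∑ j, X j ω) - X i ω + 2) - 2 * g ((∑ j, X j ω) - X i ω + 1)
              + g ((∑ j, X j ω) - X i ω)) ∂ℙ := by
    intro i
    -- pointwise decomposition
    have hptwise : ∀ ω, ((((X i ω : ℤ) : ℝ) - p i) * (g ((∑ j, X j ω) + 1) - g (∑ j, X j ω)))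
        = (1 - p i) * (((X i ω : ℤ) : ℝ) *
            (g ((∑ j, X j ω) - X i ω + 2) - g ((∑ j, X j ω) - X i ω + 1)))
          - p i * ((1 - ((X i ω : ℤ) : ℝ)) *
            (g ((∑ j, X j ω) - X i ω + 1) - g ((∑ j, X j ω) - X i ω))) := by
      intro ω
      rcases h01 i ω with h | h
      · rw [h]; push_cast; ring_nf
      · rw [h]
        have e1 : (∑ j, X j ω) - 1 + 2 = (∑ j, X j ω) + 1 := by ring
        have e2 : (∑ j, X j ω) - 1 + 1 = (∑ j, X j ω) := by ring
        rw [e1, e2]; push_cast; ring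
    rw [integral_congr_ae (Filter.Eventually.of_forall hptwise)]
    have mX : Measurable (fun ω => ((X i ω : ℤ) : ℝ)) := measurable_from_top.comp (hmeas i)
    have mψ1 : Measurable (fun ω => g ((∑ j, X j ω) - X i ω + 2) - g ((∑ j, X j ω) - X i ω + 1)) :=
      (measurable_from_top (f := fun z : ℤ => g (z + 2) - g (z + 1))).comp (hWimeas i)
    have mψ2 : Measurable (fun ω => g ((∑ j, X j ω) - X i ω + 1) - g ((∑ j, X j ω) - X i ω)) :=
      (measurable_from_top (f := fun z : ℤ => g (z + 1) - g z)).comp (hWimeas i)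
    have hint1 : Integrable (fun ω => ((X i ω : ℤ) : ℝ) *
        (g ((∑ j, X j ω) - X i ω + 2) - g ((∑ j, X j ω) - X i ω + 1))) ℙ := by
      refine Integrable.mono' (integrable_const (2 * C)) (mX.mul mψ1).aestronglyMeasurable ?_
      refine Filter.Eventually.of_forall fun ω => ?_
      rw [Real.norm_eq_abs, abs_mul]
      rcases hXcast i ω with h | h <;> rw [h]
      · simp only [abs_zero, zero_mul]
        have := h2C ((∑ j, X j ω) - X i ω + 2) ((∑ j, X j ω) - X i ω + 1)
        have ha := abs_nonneg (g ((∑ j, X j ω) - X i ω + 2) - g ((∑ j, X j ω) - X i ω + 1))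
        linarith
      · simp only [abs_one, one_mul]; exact h2C _ _
    have hint2 : Integrable (fun ω => (1 - ((X i ω : ℤ) : ℝ)) *
        (g ((∑ j, X j ω) - X i ω + 1) - g ((∑ j, X j ω) - X i ω))) ℙ := by
      refine Integrable.mono' (integrable_const (2 * C))
        ((measurable_const.sub mX).mul mψ2).aestronglyMeasurable ?_
      refine Filter.Eventually.of_forall fun ω => ?_
      rw [Real.norm_eq_abs, abs_mul]
      rcases hXcast i ω with h | h <;> rw [h]
      · simp only [sub_zero, abs_one, one_mul]; exact h2C _ _
      · simp only [sub_self, abs_zero, zero_mul]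
        have := h2C ((∑ j, X j ω) - X i ω + 1) ((∑ j, X j ω) - X i ω)
        have ha := abs_nonneg (g ((∑ j, X j ω) - X i ω + 1) - g ((∑ j, X j ω) - X i ω))
        linarith
    rw [integral_sub (hint1.const_mul _) (hint2.const_mul _),
        integral_const_mul, integral_const_mul]
    -- apply independence to both products
    have hip1 : IndepFun (fun ω => ((X i ω : ℤ) : ℝ))
        (fun ω => g ((∑ j, X j ω) - X i ω + 2) - g ((∑ j, X j ω) - X i ω + 1)) ℙ :=
      (hindep i).symm.comp (φ := fun z : ℤ => (z : ℝ))
        (ψ := fun z : ℤ => g (z + 2) - g (z + 1)) measurable_from_top measurable_from_top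
    have hip2 : IndepFun (fun ω => 1 - ((X i ω : ℤ) : ℝ))
        (fun ω => g ((∑ j, X j ω) - X i ω + 1) - g ((∑ j, X j ω) - X i ω)) ℙ :=
      (hindep i).symm.comp (φ := fun z : ℤ => 1 - (z : ℝ))
        (ψ := fun z : ℤ => g (z + 1) - g z) measurable_from_top measurable_from_top
    have hψ1 : Integrable (fun ω => g ((∑ j, X j ω) - X i ω + 2)
        - g ((∑ j, X j ω) - X i ω + 1)) ℙ :=
      hψint i (fun z => g (z + 2) - g (z + 1)) (fun z => h2C _ _)
    have hψ2 : Integrable (fun ω => g ((∑ j, X j ω) - X i ω + 1)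
        - g ((∑ j, X j ω) - X i ω)) ℙ :=
      hψint i (fun z => g (z + 1) - g z) (fun z => h2C _ _)
    have hm1 : ∫ ω, (((X i ω : ℤ) : ℝ) *
        (g ((∑ j, X j ω) - X i ω + 2) - g ((∑ j, X j ω) - X i ω + 1))) ∂ℙ
        = (∫ ω, ((X i ω : ℤ) : ℝ) ∂ℙ) *
          ∫ ω, (g ((∑ j, X j ω) - X i ω + 2) - g ((∑ j, X j ω) - X i ω + 1)) ∂ℙ :=
      hip1.integral_fun_mul_eq_mul_integral (hXint i).aestronglyMeasurable hψ1.aestronglyMeasurable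
    have hm2 : ∫ ω, ((1 - ((X i ω : ℤ) : ℝ)) *
        (g ((∑ j, X j ω) - X i ω + 1) - g ((∑ j, X j ω) - X i ω))) ∂ℙ
        = (∫ ω, (1 - ((X i ω : ℤ) : ℝ)) ∂ℙ) *
          ∫ ω, (g ((∑ j, X j ω) - X i ω + 1) - g ((∑ j, X j ω) - X i ω)) ∂ℙ :=
      hip2.integral_fun_mul_eq_mul_integral (hXint' i).aestronglyMeasurable hψ2.aestronglyMeasurable
    rw [hm1, hm2, hEX i, hEX' i]
    -- now combine the remaining integrals
    have hfinal : ∫ ω, (g ((∑ j, X j ω) - X i ω + 2) - 2 * g ((∑ j, X j ω) - X i ω + 1)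
        + g ((∑ j, X j ω) - X i ω)) ∂ℙ
        = (∫ ω, (g ((∑ j, X j ω) - X i ω + 2) - g ((∑ j, X j ω) - X i ω + 1)) ∂ℙ)
          - ∫ ω, (g ((∑ j, X j ω) - X i ω + 1) - g ((∑ j, X j ω) - X i ω)) ∂ℙ := by
      rw [← integral_sub hψ1 hψ2]
      refine integral_congr_ae (Filter.Eventually.of_forall fun ω => ?_)
      ring
    rw [hfinal]; ring
  -- decompose the LHS as a sum
  have hsum : (fun ω => ((((∑ j, X j ω : ℤ)) : ℝ) - l1)
      * (g ((∑ j, X j ω) + 1) - g (∑ j, X j ω)))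
      = fun ω => ∑ i, ((((X i ω : ℤ) : ℝ) - p i)
          * (g ((∑ j, X j ω) + 1) - g (∑ j, X j ω))) := by
    funext ω
    rw [← Finset.sum_mul]
    congr 1
    rw [hl1, Finset.sum_sub_distrib]
    congr 1
    push_cast
    rfl
  have hintsum : ∀ i : Fin m, Integrable (fun ω => ((((X i ω : ℤ) : ℝ) - p i)
      * (g ((∑ j, X j ω) + 1) - g (∑ j, X j ω)))) ℙ := by
    intro i
    have mX : Measurable (fun ω => ((X i ω : ℤ) : ℝ)) := measurable_from_top.comp (hmeas i)
    have mψ : Measurable (fun ω => g ((∑ j, X j ω) + 1) - g (∑ j, X j ω)) :=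
      (measurable_from_top (f := fun z : ℤ => g (z + 1) - g z)).comp hWmeas
    refine Integrable.mono' (integrable_const ((1 + |p i|) * (2 * C)))
      ((mX.sub measurable_const).mul mψ).aestronglyMeasurable ?_
    refine Filter.Eventually.of_forall fun ω => ?_
    rw [Real.norm_eq_abs, abs_mul]
    have h1 : |((X i ω : ℤ) : ℝ) - p i| ≤ 1 + |p i| := by
      rcases hXcast i ω with h | h <;> rw [h] <;>
        [rw [zero_sub, abs_neg]; skip] <;>
        cases abs_cases (p i) <;> cases abs_cases ((1:ℝ) - p i) <;> linarith
    have h2 := h2C ((∑ j, X j ω) + 1) (∑ j, X j ω)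
    have h3 := abs_nonneg (((X i ω : ℤ) : ℝ) - p i)
    have h4 := abs_nonneg (g ((∑ j, X j ω) + 1) - g (∑ j, X j ω))
    nlinarith
  rw [hsum, integral_finset_sum _ (fun i _ => hintsum i)]
  exact Finset.sum_congr rfl fun i _ => key i
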